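/- The space of injective linear maps from ℝ^d to ℝ^∞ (finitely supported sequences) is contractible. -/
import Mathlib


/-- `ℝ^∞` (finitely supported sequences) with the topology of pointwise convergence
(induced from the product topology on `ℕ → ℝ`, which agrees with the colimit topology
for purposes of weak homotopy type). -/
noncomputable instance : TopologicalSpace (ℕ →₀ ℝ) :=
  TopologicalSpace.induced (fun f : ℕ →₀ ℝ => (f : ℕ → ℝ)) inferInstance

/-- The space of linear maps `ℝ^d → ℝ^∞`, topologized by the topology of pointwise
convergence (which on linear maps from a finite-dimensional space coincides with the
compact-open topology). -/
noncomputable instance (d : ℕ) :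
    TopologicalSpace ((Fin d → ℝ) →ₗ[ℝ] (ℕ →₀ ℝ)) :=
  TopologicalSpace.induced
    (fun f : (Fin d → ℝ) →ₗ[ℝ] (ℕ →₀ ℝ) => (f : (Fin d → ℝ) → (ℕ →₀ ℝ))) inferInstance

/-! ### Auxiliary constructions -/

/-- The doubling shift `ℝ^∞ → ℝ^∞`, sending the `n`-th basis vector to the `2n`-th. -/
noncomputable def Dmap : (ℕ →₀ ℝ) →ₗ[ℝ] (ℕ →₀ ℝ) :=
  Finsupp.lmapDomain ℝ ℝ (fun n : ℕ => 2 * n)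

lemma e2inj : Function.Injective (fun n : ℕ => 2 * n) := fun a b h => by
  simpa using Nat.eq_of_mul_eq_mul_left (by norm_num) h

lemma Dcoord (u : ℕ →₀ ℝ) (n : ℕ) :
    Dmap u n = if 2 ∣ n then u (n / 2) else 0 := by
  rw [Dmap, Finsupp.lmapDomain_apply]
  by_cases h : 2 ∣ n
  · obtain ⟨m, rfl⟩ := h
    rw [if_pos ⟨m, rfl⟩]
    have h2 : 2 * m / 2 = m := by omega
    rw [h2]
    exact Finsupp.mapDomain_apply e2inj u m
  · rw [if_neg h, Finsupp.mapDomain_notin_range]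
    rintro ⟨m, rfl⟩
    exact h ⟨m, rfl⟩

lemma Dinj : Function.Injective (Dmap : (ℕ →₀ ℝ) → (ℕ →₀ ℝ)) := by
  intro a b h
  exact Finsupp.mapDomain_injective e2inj (by simpa [Dmap] using h)

lemma oddinj {d : ℕ} : Function.Injective (fun i : Fin d => 2 * (i : ℕ) + 1) := by
  intro a b h
  dsimp only at h
  exact Fin.val_injective (by omega)

/-- The fixed odd-coordinate embedding `ℝ^d → ℝ^∞`. -/
noncomputable def Jmap (d : ℕ) : (Fin d → ℝ) →ₗ[ℝ] (ℕ →₀ ℝ) :=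
  (Finsupp.lmapDomain ℝ ℝ (fun i : Fin d => 2 * (i : ℕ) + 1)) ∘ₗ
    (Finsupp.linearEquivFunOnFinite ℝ ℝ (Fin d)).symm.toLinearMap

lemma Jcoord_odd {d : ℕ} (x : Fin d → ℝ) (i : Fin d) :
    Jmap d x (2 * (i : ℕ) + 1) = x i := by
  rw [Jmap, LinearMap.comp_apply, Finsupp.lmapDomain_apply]
  rw [Finsupp.mapDomain_apply oddinj]
  simp [Finsupp.linearEquivFunOnFinite]

lemma Jcoord_even {d : ℕ} (x : Fin d → ℝ) {n : ℕ} (hn : 2 ∣ n) :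
    Jmap d x n = 0 := by
  rw [Jmap, LinearMap.comp_apply, Finsupp.lmapDomain_apply]
  rw [Finsupp.mapDomain_notin_range]
  rintro ⟨i, rfl⟩
  dsimp only at hn
  omega

lemma Jinj (d : ℕ) : Function.Injective (Jmap d : (Fin d → ℝ) → (ℕ →₀ ℝ)) := by
  intro a b h
  funext i
  have := DFunLike.congr_fun h (2 * (i : ℕ) + 1)
  simpa [Jcoord_odd] using this

/-! ### Injectivity along the two straight-line homotopies -/

lemma injA {d : ℕ} (f : (Fin d → ℝ) →ₗ[ℝ] (ℕ →₀ ℝ)) (hf : Function.Injective f)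
    (t : ℝ) : Function.Injective ((1 - t) • f + t • (Dmap ∘ₗ f)) := by
  have key : ∀ x, ((1 - t) • f + t • (Dmap ∘ₗ f)) x = 0 → x = 0 := by
    intro x hx
    have hco : ∀ n, (1 - t) * f x n + t * Dmap (f x) n = 0 := by
      intro n
      have := DFunLike.congr_fun hx n
      simpa [LinearMap.add_apply, LinearMap.smul_apply, Finsupp.add_apply,
        Finsupp.smul_apply, smul_eq_mul, LinearMap.comp_apply] using this
    set u := f x with hu
    by_cases hu0 : u = 0
    · exact hf (show f x = f 0 by rw [map_zero, ← hu, hu0])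
    · exfalso
      have hne : u.support.Nonempty := Finsupp.support_nonempty_iff.mpr hu0
      set N := u.support.max' hne with hNdef
      have hNmem : N ∈ u.support := u.support.max'_mem hne
      have hN : u N ≠ 0 := Finsupp.mem_support_iff.mp hNmem
      rcases Nat.eq_zero_or_pos N with h0 | hpos
      · have h := hco 0
        rw [Dcoord] at h
        rw [if_pos ⟨0, rfl⟩] at h
        norm_num at h
        have : u 0 = 0 := by linear_combination h
        rw [← h0] at this
        exact hN this
      · have h2N : u (2 * N) = 0 := by
          by_contra h
          have hmem : 2 * N ∈ u.support := Finsupp.mem_support_iff.mpr h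
          have := u.support.le_max' _ hmem
          omega
        have hk := hco (2 * N)
        rw [Dcoord, if_pos ⟨N, rfl⟩] at hk
        have hdiv : 2 * N / 2 = N := by omega
        rw [hdiv, h2N] at hk
        have ht : t = 0 ∨ u N = 0 := by
          rcases mul_eq_zero.mp (by linarith : t * u N = 0) with h' | h'
          · exact Or.inl h'
          · exact Or.inr h'
        rcases ht with ht | ht
        · have h := hco N
          rw [ht] at h
          simp at h
          exact hN h
        · exact hN ht
  intro a b hab
  have := key (a - b) (by rw [map_sub, hab, sub_self])
  exact sub_eq_zero.mp this

lemma injB {d : ℕ} (f : (Fin d → ℝ) →ₗ[ℝ] (ℕ →₀ ℝ)) (hf : Function.Injective f)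
    (t : ℝ) : Function.Injective ((1 - t) • (Dmap ∘ₗ f) + t • Jmap d) := by
  have key : ∀ x, ((1 - t) • (Dmap ∘ₗ f) + t • Jmap d) x = 0 → x = 0 := by
    intro x hx
    have hco : ∀ n, (1 - t) * Dmap (f x) n + t * Jmap d x n = 0 := by
      intro n
      have := DFunLike.congr_fun hx n
      simpa [LinearMap.add_apply, LinearMap.smul_apply, Finsupp.add_apply,
        Finsupp.smul_apply, smul_eq_mul, LinearMap.comp_apply] using this
    by_cases ht : t = 0
    · have hD : Dmap (f x) = 0 := by
        ext n
        have h := hco n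
        rw [ht] at h
        simpa using h
      have : f x = 0 := Dinj (by rw [hD, map_zero])
      exact hf (by rw [this, map_zero])
    · funext i
      have h := hco (2 * (i : ℕ) + 1)
      rw [Dcoord, if_neg (by omega), Jcoord_odd] at h
      have : t * x i = 0 := by linarith
      have := (mul_eq_zero.mp this).resolve_left ht
      simpa using this
  intro a b hab
  have := key (a - b) (by rw [map_sub, hab, sub_self])
  exact sub_eq_zero.mp this

/-! ### Continuity helpers -/

lemma cont_coord {X : Type*} [TopologicalSpace X] {d : ℕ}
    (g : X → ((Fin d → ℝ) →ₗ[ℝ] (ℕ →₀ ℝ)))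
    (h : ∀ (x : Fin d → ℝ) (n : ℕ), Continuous fun a => g a x n) : Continuous g := by
  apply continuous_induced_rng.mpr
  apply continuous_pi
  intro x
  apply continuous_induced_rng.mpr
  exact continuous_pi fun n => h x n

lemma cont_eval {d : ℕ} (x : Fin d → ℝ) (n : ℕ) :
    Continuous fun f : (Fin d → ℝ) →ₗ[ℝ] (ℕ →₀ ℝ) => f x n := by
  have h1 : Continuous fun f : (Fin d → ℝ) →ₗ[ℝ] (ℕ →₀ ℝ) =>
      (f : (Fin d → ℝ) → (ℕ →₀ ℝ)) := continuous_induced_dom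
  have h2 : Continuous fun φ : (Fin d → ℝ) → (ℕ →₀ ℝ) => φ x := continuous_apply x
  have h3 : Continuous fun u : ℕ →₀ ℝ => (u : ℕ → ℝ) := continuous_induced_dom
  have h4 : Continuous fun v : ℕ → ℝ => v n := continuous_apply n
  exact h4.comp (h3.comp (h2.comp h1))

/-! ### The homotopies -/

/-- The map `f ↦ D ∘ f` on the space of injective linear maps. -/
noncomputable def Phi (d : ℕ) :
    C({f : (Fin d → ℝ) →ₗ[ℝ] (ℕ →₀ ℝ) // Function.Injective f},
      {f : (Fin d → ℝ) →ₗ[ℝ] (ℕ →₀ ℝ) // Function.Injective f}) where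
  toFun s := ⟨Dmap ∘ₗ s.1, by rw [LinearMap.coe_comp]; exact Dinj.comp s.2⟩
  continuous_toFun := by
    apply Continuous.subtype_mk
    apply cont_coord
    intro x n
    have hrw : ∀ s : {f : (Fin d → ℝ) →ₗ[ℝ] (ℕ →₀ ℝ) // Function.Injective f},
        (Dmap ∘ₗ s.1) x n = if 2 ∣ n then s.1 x (n / 2) else 0 := by
      intro s
      rw [LinearMap.comp_apply, Dcoord]
    simp only [hrw]
    by_cases h : 2 ∣ n
    · simp only [if_pos h]
      exact (cont_eval x (n / 2)).comp continuous_subtype_val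
    · simp only [if_neg h]
      exact continuous_const

/-- The constant map at the odd embedding. -/
noncomputable def Jpt (d : ℕ) :
    {f : (Fin d → ℝ) →ₗ[ℝ] (ℕ →₀ ℝ) // Function.Injective f} :=
  ⟨Jmap d, Jinj d⟩

noncomputable def H1 (d : ℕ) :
    ContinuousMap.Homotopy
      (ContinuousMap.id {f : (Fin d → ℝ) →ₗ[ℝ] (ℕ →₀ ℝ) // Function.Injective f})
      (Phi d) where
  toFun p := ⟨(1 - (p.1 : ℝ)) • p.2.1 + (p.1 : ℝ) • (Dmap ∘ₗ p.2.1),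
    injA p.2.1 p.2.2 (p.1 : ℝ)⟩
  continuous_toFun := by
    apply Continuous.subtype_mk
    apply cont_coord
    intro x n
    have hrw : ∀ p : unitInterval ×
        {f : (Fin d → ℝ) →ₗ[ℝ] (ℕ →₀ ℝ) // Function.Injective f},
        ((1 - (p.1 : ℝ)) • p.2.1 + (p.1 : ℝ) • (Dmap ∘ₗ p.2.1)) x n
          = (1 - (p.1 : ℝ)) * (p.2.1 x n)
            + (p.1 : ℝ) * (if 2 ∣ n then p.2.1 x (n / 2) else 0) := by
      intro p
      simp [LinearMap.add_apply, LinearMap.smul_apply, Finsupp.add_apply,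
        Finsupp.smul_apply, smul_eq_mul, LinearMap.comp_apply, Dcoord]
    simp only [hrw]
    have hc1 : Continuous fun p : unitInterval ×
        {f : (Fin d → ℝ) →ₗ[ℝ] (ℕ →₀ ℝ) // Function.Injective f} => (p.1 : ℝ) :=
      continuous_induced_dom.comp continuous_fst
    have hc2 : Continuous fun p : unitInterval ×
        {f : (Fin d → ℝ) →ₗ[ℝ] (ℕ →₀ ℝ) // Function.Injective f} => p.2.1 x n :=
      (cont_eval x n).comp (continuous_subtype_val.comp continuous_snd)
    by_cases h : 2 ∣ n
    · simp only [if_pos h]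
      have hc3 : Continuous fun p : unitInterval ×
          {f : (Fin d → ℝ) →ₗ[ℝ] (ℕ →₀ ℝ) // Function.Injective f} =>
          p.2.1 x (n / 2) :=
        (cont_eval x (n / 2)).comp (continuous_subtype_val.comp continuous_snd)
      exact (((continuous_const.sub hc1).mul hc2).add (hc1.mul hc3))
    · simp only [if_neg h, mul_zero, add_zero]
      exact (continuous_const.sub hc1).mul hc2
  map_zero_left s := by
    apply Subtype.ext
    simp
  map_one_left s := by
    apply Subtype.ext
    simp [Phi]

noncomputable def H2 (d : ℕ) :
    ContinuousMap.Homotopy (Phi d)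
      (ContinuousMap.const {f : (Fin d → ℝ) →ₗ[ℝ] (ℕ →₀ ℝ) // Function.Injective f}
        (Jpt d)) where
  toFun p := ⟨(1 - (p.1 : ℝ)) • (Dmap ∘ₗ p.2.1) + (p.1 : ℝ) • Jmap d,
    injB p.2.1 p.2.2 (p.1 : ℝ)⟩
  continuous_toFun := by
    apply Continuous.subtype_mk
    apply cont_coord
    intro x n
    have hrw : ∀ p : unitInterval ×
        {f : (Fin d → ℝ) →ₗ[ℝ] (ℕ →₀ ℝ) // Function.Injective f},
        ((1 - (p.1 : ℝ)) • (Dmap ∘ₗ p.2.1) + (p.1 : ℝ) • Jmap d) x n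
          = (1 - (p.1 : ℝ)) * (if 2 ∣ n then p.2.1 x (n / 2) else 0)
            + (p.1 : ℝ) * (Jmap d x n) := by
      intro p
      simp [LinearMap.add_apply, LinearMap.smul_apply, Finsupp.add_apply,
        Finsupp.smul_apply, smul_eq_mul, LinearMap.comp_apply, Dcoord]
    simp only [hrw]
    have hc1 : Continuous fun p : unitInterval ×
        {f : (Fin d → ℝ) →ₗ[ℝ] (ℕ →₀ ℝ) // Function.Injective f} => (p.1 : ℝ) :=
      continuous_induced_dom.comp continuous_fst
    by_cases h : 2 ∣ n
    · simp only [if_pos h]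
      have hc3 : Continuous fun p : unitInterval ×
          {f : (Fin d → ℝ) →ₗ[ℝ] (ℕ →₀ ℝ) // Function.Injective f} =>
          p.2.1 x (n / 2) :=
        (cont_eval x (n / 2)).comp (continuous_subtype_val.comp continuous_snd)
      exact ((continuous_const.sub hc1).mul hc3).add (hc1.mul continuous_const)
    · simp only [if_neg h, mul_zero, zero_add]
      exact hc1.mul continuous_const
  map_zero_left s := by
    apply Subtype.ext
    simp [Phi]
  map_one_left s := by
    apply Subtype.ext
    simp [Jpt]

/-- The space of injective linear maps `ℝ^d → ℝ^∞` is contractible. -/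
theorem stmt3 (d : ℕ) :
    ContractibleSpace {f : (Fin d → ℝ) →ₗ[ℝ] (ℕ →₀ ℝ) // Function.Injective f} := by
  rw [contractible_iff_id_nullhomotopic]
  exact ⟨Jpt d, ⟨(H1 d).trans (H2 d)⟩⟩
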